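/- arXiv:2307.11461 — 2 statements merged into one kernel-verified Lean document; each statement's English description precedes it below -/
import Mathlib

section
/- The only F_2-linear map f : V → V satisfying (1) f∘f = m∘Δ, (2) m∘(f⊗id) = m∘(id⊗f) = f∘m, (3) (f⊗id)∘Δ = (id⊗f)∘Δ = Δ∘f, and (4) f is filtered with respect to the quantum grading shifted by 1 (i.e., f(1) ∈ span{1,x} and f(x) ∈ span{x}, where q(1)=1, q(x)=-1), is the identity map f = id_V. -/
open TensorProduct

abbrev F2 := ZMod 2
abbrev V := F2 × F2

/-- basis element `1` -/
def e1 : V := (1, 0)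
/-- basis element `x` -/
def ex : V := (0, 1)
/-- a = 1 + x -/
def a : V := e1 + ex
/-- b = x -/
def b : V := ex

/-- Bar-Natan multiplication as a bilinear map. -/
def mB : V →ₗ[F2] V →ₗ[F2] V :=
  LinearMap.mk₂ F2 (fun u v => (u.1 * v.1, u.1 * v.2 + u.2 * v.1 + u.2 * v.2))
    (by intro u u' v; apply Prod.ext <;> simp <;> ring)
    (by intro c u v; apply Prod.ext <;> simp <;> ring)
    (by intro u v v'; apply Prod.ext <;> simp <;> ring)
    (by intro c u v; apply Prod.ext <;> simp <;> ring)

/-- Bar-Natan multiplication m : V ⊗ V → V. -/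
noncomputable def mm : V ⊗[F2] V →ₗ[F2] V := TensorProduct.lift mB

/-- Bar-Natan comultiplication Δ : V → V ⊗ V,
Δ(1) = 1⊗x + x⊗1 + 1⊗1, Δ(x) = x⊗x. -/
noncomputable def Δ : V →ₗ[F2] V ⊗[F2] V :=
  (LinearMap.fst F2 F2 F2).smulRight (e1 ⊗ₜ ex + ex ⊗ₜ e1 + e1 ⊗ₜ e1)
    + (LinearMap.snd F2 F2 F2).smulRight (ex ⊗ₜ ex)

/-- counit η : V → F₂, η(1)=0, η(x)=1. -/
def η : V →ₗ[F2] F2 := LinearMap.snd F2 F2 F2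

/-- unit ι : F₂ → V. -/
def ιu : F2 →ₗ[F2] V := LinearMap.toSpanSingleton F2 V e1


/-- The only F₂-linear map f : V → V satisfying f∘f = m∘Δ, the compatibility
conditions with m and Δ, and the filtration condition (f(x) ∈ span{x}),
is the identity. -/
theorem barNatan_unique_one_one_bifurcation (f : V →ₗ[F2] V)
    (h1 : f.comp f = mm.comp Δ)
    (h2a : mm.comp (LinearMap.rTensor V f) = f.comp mm)
    (h2b : mm.comp (LinearMap.lTensor V f) = f.comp mm)
    (h3a : (LinearMap.rTensor V f).comp Δ = Δ.comp f)
    (h3b : (LinearMap.lTensor V f).comp Δ = Δ.comp f)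
    (h4 : f ex ∈ Submodule.span F2 {ex}) :
    f = LinearMap.id := by
  obtain ⟨c, hc⟩ := Submodule.mem_span_singleton.mp h4
  replace hc := hc.symm
  have hΔx : Δ ex = ex ⊗ₜ ex := by
    simp [Δ, ex, e1]
  have hmx : mm (ex ⊗ₜ[F2] ex) = ex := by
    simp [mm, mB, ex]
  have hA := congrFun (congrArg DFunLike.coe h1) ex
  simp only [LinearMap.comp_apply, hΔx, hmx] at hA
  rw [hc, map_smul, hc, smul_smul] at hA
  have hcc : c * c = 1 := by
    have := congrArg Prod.snd hA
    simpa [ex] using this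
  have hc1 : c = 1 := by
    have h : ∀ d : F2, d * d = 1 → d = 1 := by decide
    exact h c hcc
  rw [hc1, one_smul] at hc
  -- p + q = 1 from h2a at e1 ⊗ ex
  have hB := congrFun (congrArg DFunLike.coe h2a) (e1 ⊗ₜ ex)
  simp only [LinearMap.comp_apply, LinearMap.rTensor_tmul] at hB
  have hm1x : mm (e1 ⊗ₜ[F2] ex) = ex := by simp [mm, mB, e1, ex]
  rw [hm1x, hc] at hB
  have hpq : (f e1).1 + (f e1).2 = 1 := by
    have := congrArg Prod.snd hB
    simpa [mm, mB, ex] using this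
  -- p = 1 from h1 at e1
  have hsplit : f e1 = (f e1).1 • e1 + (f e1).2 • ex := by
    apply Prod.ext <;> simp [e1, ex]
  have hD := congrFun (congrArg DFunLike.coe h1) e1
  simp only [LinearMap.comp_apply] at hD
  have hmΔ1 : mm (Δ e1) = e1 := by
    simp [Δ, mm, mB, e1, ex]
    decide
  rw [hmΔ1] at hD
  rw [hsplit, map_add, map_smul, map_smul, hc] at hD
  have hp : (f e1).1 = 1 := by
    have h' := congrArg Prod.fst hD
    simp only [Prod.fst_add, Prod.smul_fst] at h'
    simp [e1, ex] at h'
    have h : ∀ d : F2, d * d = 1 → d = 1 := by decide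
    first
      | exact h _ h'
      | simpa [e1] using h'
  have hq : (f e1).2 = 0 := by
    rw [hp] at hpq
    have h : ∀ d : F2, 1 + d = 1 → d = 0 := by decide
    exact h _ hpq
  have hfe1' : f e1 = e1 := by
    rw [hsplit, hp, hq]
    simp [e1]
  apply LinearMap.ext
  intro v
  have hv : v = v.1 • e1 + v.2 • ex := by
    apply Prod.ext <;> simp [e1, ex]
  rw [hv]
  simp [map_add, map_smul, hfe1', hc]
end

section
/- If F : C → C' is a filtered quasi-isomorphism of filtration degree d between finite-dimensional filtered chain complexes over F_2 (i.e., F(F_q C) ⊆ F_{q+d} C' and F induces an isomorphism on homology), then s_min(C') ≥ s_min(C) + d and s_max(C') ≥ s_max(C) + d. -/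
/-- If F : C → C' is a filtered quasi-isomorphism of filtration degree δ
between finite-dimensional filtered chain complexes over F₂ (with nonzero
homology), then s_min(C') ≥ s_min(C) + δ and s_max(C') ≥ s_max(C) + δ.
As in `smin_le_smax`, s_min(D) = sSup {q | every cycle of D is homologous to a
cycle in 𝓕 q} and s_max(D) = sSup {q | some cycle in 𝓕 q is not a boundary}. -/
theorem s_invariants_under_filtered_quasi_iso
    (C C' : Type*) [AddCommGroup C] [Module F2 C] [FiniteDimensional F2 C]
    [AddCommGroup C'] [Module F2 C'] [FiniteDimensional F2 C']
    (d : C →ₗ[F2] C) (hd : d.comp d = 0)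
    (d' : C' →ₗ[F2] C') (hd' : d'.comp d' = 0)
    (𝓕 : ℤ → Submodule F2 C) (𝓕' : ℤ → Submodule F2 C')
    (hanti : ∀ q : ℤ, 𝓕 (q + 1) ≤ 𝓕 q) (hanti' : ∀ q : ℤ, 𝓕' (q + 1) ≤ 𝓕' q)
    (hsub : ∀ q : ℤ, ∀ z ∈ 𝓕 q, d z ∈ 𝓕 q)
    (hsub' : ∀ q : ℤ, ∀ z ∈ 𝓕' q, d' z ∈ 𝓕' q)
    (hexh : ∃ A : ℤ, ∀ q ≤ A, 𝓕 q = ⊤) (hbdd : ∃ B : ℤ, ∀ q ≥ B, 𝓕 q = ⊥)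
    (hexh' : ∃ A : ℤ, ∀ q ≤ A, 𝓕' q = ⊤) (hbdd' : ∃ B : ℤ, ∀ q ≥ B, 𝓕' q = ⊥)
    (hH : ∃ z : C, d z = 0 ∧ z ∉ LinearMap.range d)
    (F : C →ₗ[F2] C') (hchain : F.comp d = d'.comp F)
    (δ : ℤ) (hfilt : ∀ q : ℤ, ∀ z ∈ 𝓕 q, F z ∈ 𝓕' (q + δ))
    -- F induces an injection on homology
    (hinj : ∀ z : C, d z = 0 → F z ∈ LinearMap.range d' → z ∈ LinearMap.range d)
    -- F induces a surjection on homology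
    (hsurj : ∀ z' : C', d' z' = 0 →
      ∃ z : C, d z = 0 ∧ z' - F z ∈ LinearMap.range d') :
    sSup {q : ℤ | ∀ z : C, d z = 0 →
        ∃ w ∈ 𝓕 q, d w = 0 ∧ z - w ∈ LinearMap.range d} + δ
      ≤ sSup {q : ℤ | ∀ z' : C', d' z' = 0 →
        ∃ w ∈ 𝓕' q, d' w = 0 ∧ z' - w ∈ LinearMap.range d'} ∧
    sSup {q : ℤ | ∃ z ∈ 𝓕 q, d z = 0 ∧ z ∉ LinearMap.range d} + δ
      ≤ sSup {q : ℤ | ∃ z ∈ 𝓕' q, d' z = 0 ∧ z ∉ LinearMap.range d'} := by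
  obtain ⟨A, hA⟩ := hexh
  obtain ⟨B', hB'⟩ := hbdd'
  obtain ⟨z₀, hz₀d, hz₀r⟩ := hH
  have hcomm : ∀ x : C, F (d x) = d' (F x) := fun x => LinearMap.congr_fun hchain x
  have hFz₀d : d' (F z₀) = 0 := by rw [← hcomm, hz₀d, map_zero]
  have hFz₀r : F z₀ ∉ LinearMap.range d' := fun h => hz₀r (hinj z₀ hz₀d h)
  set S := {q : ℤ | ∀ z : C, d z = 0 →
      ∃ w ∈ 𝓕 q, d w = 0 ∧ z - w ∈ LinearMap.range d} with hS
  set S' := {q : ℤ | ∀ z' : C', d' z' = 0 →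
      ∃ w ∈ 𝓕' q, d' w = 0 ∧ z' - w ∈ LinearMap.range d'} with hS'
  set T := {q : ℤ | ∃ z ∈ 𝓕 q, d z = 0 ∧ z ∉ LinearMap.range d} with hT
  set T' := {q : ℤ | ∃ z ∈ 𝓕' q, d' z = 0 ∧ z ∉ LinearMap.range d'} with hT'
  have hstep1 : ∀ q ∈ S, q + δ ∈ S' := by
    intro q hq z' hz'
    obtain ⟨z, hz, b, hbeq⟩ := hsurj z' hz'
    obtain ⟨w, hw, hwd, a, ha⟩ := hq z hz
    refine ⟨F w, hfilt q w hw, by rw [← hcomm, hwd, map_zero], ⟨b + F a, ?_⟩⟩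
    have : z' - F w = (z' - F z) + F (z - w) := by rw [map_sub]; abel
    rw [this, ← hbeq, ← ha, hcomm, map_add]
  have hstep2 : ∀ q ∈ T, q + δ ∈ T' := by
    rintro q ⟨z, hz, hzd, hzr⟩
    exact ⟨F z, hfilt q z hz, by rw [← hcomm, hzd, map_zero],
      fun h => hzr (hinj z hzd h)⟩
  have hSne : A ∈ S := fun z hz =>
    ⟨z, by rw [hA A le_rfl]; trivial, hz, ⟨0, by simp⟩⟩
  have hTne : A ∈ T := ⟨z₀, by rw [hA A le_rfl]; trivial, hz₀d, hz₀r⟩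
  have hS'bdd : BddAbove S' := by
    refine ⟨B', fun q hq => ?_⟩
    by_contra h
    obtain ⟨w, hw, hwd, hr⟩ := hq (F z₀) hFz₀d
    rw [hB' q (by omega)] at hw
    simp only [Submodule.mem_bot] at hw
    rw [hw, sub_zero] at hr
    exact hFz₀r hr
  have hT'bdd : BddAbove T' := by
    refine ⟨B', fun q hq => ?_⟩
    by_contra h
    obtain ⟨z, hz, hzd, hzr⟩ := hq
    rw [hB' q (by omega)] at hz
    simp only [Submodule.mem_bot] at hz
    exact hzr ⟨0, by simp [hz]⟩
  constructor
  · have h1 : sSup S ≤ sSup S' - δ :=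
      csSup_le ⟨A, hSne⟩ fun q hq => by
        have := le_csSup hS'bdd (hstep1 q hq); omega
    omega
  · have h2 : sSup T ≤ sSup T' - δ :=
      csSup_le ⟨A, hTne⟩ fun q hq => by
        have := le_csSup hT'bdd (hstep2 q hq); omega
    omega
end
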